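/- Let φ: X → X' be a morphism of finite simplicial trees. Then for all ε > 0 there is δ > 0 such that if (R,R') is a δ-approximation between φ: X → X' and a morphism ψ: Y → Y' of finite simplicial trees, then |m(φ) − m(ψ)| < ε. -/
import Mathlib


open Set Topology

noncomputable section

/-- The segment between two points of a metric space. -/
def seg {X : Type} [MetricSpace X] (x y : X) : Set X :=
  {z | dist x z + dist z y = dist x y}

/-- A nonempty geodesic 0-hyperbolic metric space: a metric tree. -/
def IsTreeSpace (X : Type) [MetricSpace X] : Prop :=
  Nonempty X ∧
    (∀ x y : X, ∀ r : ℝ, 0 ≤ r → r ≤ dist x y →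
      ∃ z : X, dist x z = r ∧ dist z y = dist x y - r) ∧
    ∀ x y z w : X, dist x y + dist z w ≤ max (dist x z + dist y w) (dist x w + dist y z)

/-- A finite metric simplicial tree: a metric tree which is a finite union of segments. -/
def IsFiniteSimpTree (X : Type) [MetricSpace X] : Prop :=
  IsTreeSpace X ∧ ∃ V : Set X, V.Finite ∧ V.Nonempty ∧
    ∀ x : X, ∃ u ∈ V, ∃ v ∈ V, x ∈ seg u v

/-- A subtree: a nonempty subset closed under taking segments. -/
def IsSubtreeSet {X : Type} [MetricSpace X] (A : Set X) : Prop :=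
  A.Nonempty ∧ ∀ x ∈ A, ∀ y ∈ A, seg x y ⊆ A

/-- An `ε`-approximation between `K ⊆ X` and `L ⊆ Y`: a relation that surjects onto
each factor and distorts distances by less than `ε`. -/
def IsApprox {X Y : Type} [MetricSpace X] [MetricSpace Y]
    (K : Set X) (L : Set Y) (R : Set (X × Y)) (ε : ℝ) : Prop :=
  R ⊆ K ×ˢ L ∧ (∀ x ∈ K, ∃ y : Y, (x, y) ∈ R) ∧ (∀ y ∈ L, ∃ x : X, (x, y) ∈ R) ∧
    ∀ ⦃x : X⦄ ⦃y : Y⦄, (x, y) ∈ R → ∀ ⦃x' : X⦄ ⦃y' : Y⦄, (x', y') ∈ R →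
      |dist x x' - dist y y'| < ε

/-- A full approximation: related pairs relate the whole segments between them. -/
def IsFull {X Y : Type} [MetricSpace X] [MetricSpace Y] (R : Set (X × Y)) : Prop :=
  ∀ ⦃x : X⦄ ⦃y : Y⦄, (x, y) ∈ R → ∀ ⦃x' : X⦄ ⦃y' : Y⦄, (x', y') ∈ R →
    (∀ z ∈ seg x x', ∃ w ∈ seg y y', (z, w) ∈ R) ∧
    (∀ w ∈ seg y y', ∃ z ∈ seg x x', (z, w) ∈ R)

/-- A morphism of metric trees: every nondegenerate segment has a nondegenerate
initial subsegment on which the map is an isometry. -/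
def IsMorphism {X X' : Type} [MetricSpace X] [MetricSpace X'] (φ : X → X') : Prop :=
  ∀ x y : X, x ≠ y → ∃ x' : X, x' ∈ seg x y ∧ x' ≠ x ∧
    ∀ u ∈ seg x x', ∀ v ∈ seg x x', dist (φ u) (φ v) = dist u v

/-- `m(φ) = sup { d(φ(z),φ(x)) | z ∈ [x,x'], φ(x) = φ(x') }`. -/
def mFold {X X' : Type} [MetricSpace X] [MetricSpace X'] (φ : X → X') : ℝ :=
  sSup {r : ℝ | ∃ x x' z : X, φ x = φ x' ∧ z ∈ seg x x' ∧ r = dist (φ z) (φ x)}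

/-- The graph of a map. -/
def gr {X X' : Type} (φ : X → X') : Set (X × X') := {p | p.2 = φ p.1}

/-- `V_t = {(x,y) : d(φ(x),y) ≤ m(φ)t}`. -/
def Vset {X X' : Type} [MetricSpace X] [MetricSpace X'] (φ : X → X') (t : ℝ) :
    Set (X × X') := {p | dist (φ p.1) p.2 ≤ mFold φ * t}

/-- `W_t`: points of `V_t` whose horizontal path component meets the graph of `φ`. -/
def Wset {X X' : Type} [MetricSpace X] [MetricSpace X'] (φ : X → X') (t : ℝ) :
    Set (X × X') :=
  {p | p ∈ Vset φ t ∧ ∃ q ∈ gr φ, JoinedIn (Vset φ t ∩ {r | r.2 = p.2}) p q}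

/-- Two points of `W_t` lie in the same member of the partition `𝔉_t` (same horizontal
path component of `W_t`). -/
def SameFiber {X X' : Type} [MetricSpace X] [MetricSpace X'] (φ : X → X') (t : ℝ)
    (p q : X × X') : Prop :=
  p.2 = q.2 ∧ JoinedIn (Wset φ t ∩ {r | r.2 = p.2}) p q

/-- An `ε`-approximation `(R,R')` (assumed full) between the maps `φ` and `ψ`. -/
def MapApprox {X X' Y Y' : Type} [MetricSpace X] [MetricSpace X'] [MetricSpace Y]
    [MetricSpace Y'] (φ : X → X') (ψ : Y → Y')
    (R : Set (X × Y)) (R' : Set (X' × Y')) (ε : ℝ) : Prop :=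
  IsApprox univ univ R ε ∧ IsApprox univ univ R' ε ∧ IsFull R ∧ IsFull R' ∧
    ∀ x y, (x, y) ∈ R → (φ x, ψ y) ∈ R'

/-- Distance with respect to an explicitly given metric space structure. -/
def distIn {Q : Type} (m : MetricSpace Q) (a b : Q) : ℝ :=
  @dist Q m.toPseudoMetricSpace.toDist a b

/-- `p` is a nearest point of `A` to `x`. -/
def IsNearestPt {X : Type} [MetricSpace X] (A : Set X) (x p : X) : Prop :=
  p ∈ A ∧ ∀ q ∈ A, dist x p ≤ dist x q

/-- `m` is a midpoint (circumcenter) of the set `A`. -/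
def IsMidpointOf {X : Type} [MetricSpace X] (A : Set X) (m : X) : Prop :=
  m ∈ A ∧ ∀ m' ∈ A, sSup (dist m '' A) ≤ sSup (dist m' '' A)

/-- Combinatorial data for a taut corner path in `W_t(φ)`: a concatenation of pieces,
each essential (in the graph) or nonessential (in a horizontal component). -/
structure CornerPath {X X' : Type} [MetricSpace X] [MetricSpace X']
    (φ : X → X') (t : ℝ) where
  n : ℕ
  pts : Fin (n + 1) → X × X'
  ess : Fin n → Bool

namespace CornerPath

variable {X X' : Type} [MetricSpace X] [MetricSpace X'] {φ : X → X'} {t : ℝ}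

/-- `γ` is a taut corner path in `W_t(φ)` from `z` to `w`: the pieces lie in `W_t`,
essential pieces are non-backtracking paths in the graph, nonessential pieces lie in a
single member of `𝔉_t`, consecutive pieces have different types and distinct
nonessential pieces lie in distinct members of `𝔉_t`. -/
def IsTaut (γ : CornerPath φ t) (z w : X × X') : Prop :=
  γ.pts 0 = z ∧ γ.pts (Fin.last γ.n) = w ∧
  (∀ i : Fin (γ.n + 1), γ.pts i ∈ Wset φ t) ∧
  (∀ i : Fin γ.n, γ.ess i = true → γ.pts i.castSucc ∈ gr φ ∧ γ.pts i.succ ∈ gr φ) ∧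
  (∀ i : Fin γ.n, γ.ess i = false → SameFiber φ t (γ.pts i.castSucc) (γ.pts i.succ)) ∧
  (∀ i : Fin γ.n, ∀ h : i.1 + 1 < γ.n, γ.ess i ≠ γ.ess ⟨i.1 + 1, h⟩) ∧
  ∀ i j : Fin γ.n, i ≠ j → γ.ess i = false → γ.ess j = false →
    ¬ SameFiber φ t (γ.pts i.castSucc) (γ.pts j.castSucc)

/-- The length of a corner path: the total length of its essential pieces. -/
def length (γ : CornerPath φ t) : ℝ :=
  ∑ i : Fin γ.n, if γ.ess i = true then dist (γ.pts i.castSucc).1 (γ.pts i.succ).1 else 0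

end CornerPath

/-- The family of folded trees `X_t = W_t(φ)/𝔉_t` associated to a morphism `φ`,
with the quotient maps `[·]_t` and the metric determined by lengths of taut corner
paths. -/
structure FoldFamily {X X' : Type} [MetricSpace X] [MetricSpace X'] (φ : X → X') where
  Q : ℝ → Type
  metricQ : ∀ t : ℝ, MetricSpace (Q t)
  cls : ∀ t : ℝ, X × X' → Q t
  surj : ∀ t : ℝ, 0 ≤ t → t ≤ 1 → ∀ q : Q t, ∃ p ∈ Wset φ t, cls t p = q
  eq_iff : ∀ t : ℝ, 0 ≤ t → t ≤ 1 → ∀ p ∈ Wset φ t, ∀ p' ∈ Wset φ t,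
    (cls t p = cls t p' ↔ SameFiber φ t p p')
  dist_eq : ∀ t : ℝ, 0 ≤ t → t ≤ 1 → ∀ p ∈ Wset φ t, ∀ p' ∈ Wset φ t,
    ∀ γ : CornerPath φ t, γ.IsTaut p p' →
      distIn (metricQ t) (cls t p) (cls t p') = γ.length

/-- A `G`-tree: a metric simplicial tree (nonempty, geodesic, 0-hyperbolic, with a
`G`-invariant locally finite covering family of vertices) on which `G` acts by
isometries. -/
structure GTree (G : Type) [Group G] where
  carrier : Type
  [metric : MetricSpace carrier]
  [action : MulAction G carrier]
  nonempty : Nonempty carrier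
  isom : ∀ g : G, Isometry (fun x : carrier => g • x)
  geodesic : ∀ x y : carrier, ∀ r : ℝ, 0 ≤ r → r ≤ dist x y →
    ∃ z : carrier, dist x z = r ∧ dist z y = dist x y - r
  fourPoint : ∀ x y z w : carrier,
    dist x y + dist z w ≤ max (dist x z + dist y w) (dist x w + dist y z)
  vertices : Set carrier
  vertexInv : ∀ g : G, ∀ x ∈ vertices, g • x ∈ vertices
  vertexCover : ∀ x : carrier, ∃ u ∈ vertices, ∃ v ∈ vertices, x ∈ seg u v
  segLocFin : ∀ x y : carrier, (seg x y ∩ vertices).Finite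

attribute [instance] GTree.metric GTree.action

namespace GTree

variable {G : Type} [Group G] (T : GTree G)

/-- The translation length of `g`. -/
def ell (g : G) : ℝ := ⨅ x : T.carrier, dist x (g • x)

/-- The characteristic set of `g`. -/
def charSet (g : G) : Set T.carrier := {x | dist x (g • x) = T.ell g}

def IsHyperbolic (g : G) : Prop := 0 < T.ell g

/-- Irreducibility: there are two hyperbolic elements whose axes have bounded
intersection. -/
def Irreducible : Prop :=
  ∃ g h : G, T.IsHyperbolic g ∧ T.IsHyperbolic h ∧
    Bornology.IsBounded (T.charSet g ∩ T.charSet h)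

/-- A subgroup is elliptic if it has a global fixed point. -/
def EllipticSubgroup (H : Subgroup G) : Prop := ∃ x : T.carrier, ∀ h ∈ H, h • x = x

def IsSubtree (A : Set T.carrier) : Prop :=
  A.Nonempty ∧ ∀ x ∈ A, ∀ y ∈ A, seg x y ⊆ A

/-- Minimality: no proper invariant subtree. -/
def Minimal : Prop :=
  ∀ A : Set T.carrier, T.IsSubtree A → IsClosed A →
    (∀ g : G, ∀ x ∈ A, g • x ∈ A) → A = Set.univ

/-- Cocompactness of the action. -/
def Cocompact : Prop :=
  ∃ K : Set T.carrier, IsCompact K ∧ ∀ x : T.carrier, ∃ g : G, g • x ∈ K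

/-- `u` and `v` span an edge. -/
def IsEdge (u v : T.carrier) : Prop :=
  u ∈ T.vertices ∧ v ∈ T.vertices ∧ u ≠ v ∧ seg u v ∩ T.vertices = {u, v}

/-- A reduced `G`-tree: whenever `G_e = G_u` for an edge `e = [u,v]`, the endpoints
are in the same orbit. -/
def Reduced : Prop :=
  ∀ u v : T.carrier, T.IsEdge u v →
    MulAction.stabilizer G u ≤ MulAction.stabilizer G v → ∃ g : G, g • u = v

/-- The fixed-point set of a subgroup. -/
def fixedSet (H : Subgroup G) : Set T.carrier := {x | ∀ h ∈ H, h • x = x}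

/-- The characteristic set of a subgroup, taken to be a given basepoint when the
subgroup is trivial. -/
def charOf (H : Subgroup G) (y₀ : T.carrier) : Set T.carrier :=
  {y | (H = ⊥ ∧ y = y₀) ∨ (H ≠ ⊥ ∧ ∀ h ∈ H, h • y = y)}

/-- `max_{g ∈ S} d(x, gx)`. -/
def dispS (S : Finset G) (x : T.carrier) : ℝ := sSup {d : ℝ | ∃ g ∈ S, d = dist x (g • x)}

/-- `l_T(S) = min_x max_{g ∈ S} d(x,gx)`. -/
def ellS (S : Finset G) : ℝ := sInf {d : ℝ | ∃ x : T.carrier, d = T.dispS S x}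

/-- `T_S`, the characteristic set of `S`. -/
def charSetS (S : Finset G) : Set T.carrier := {x | T.dispS S x = T.ellS S}

/-- `Z_S = ⋂_{g ∈ S'} T_g` where `S' = {g ∈ S : l_T(g) = l_T(S)}`. -/
def ZS (S : Finset G) : Set T.carrier :=
  ⋂ g ∈ {g ∈ (S : Set G) | T.ell g = T.ellS S}, T.charSet g

end GTree

/-- Two `G`-trees have the same elliptic subgroups. -/
def SameElliptics {G : Type} [Group G] (T T' : GTree G) : Prop :=
  ∀ H : Subgroup G, T.EllipticSubgroup H ↔ T'.EllipticSubgroup H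

/-- An unnormalized deformation space: a maximal set of minimal cocompact `G`-trees
with the same elliptic subgroups. -/
def IsUnnormDefSpace {G : Type} [Group G] (𝒯 : Set (GTree G)) : Prop :=
  𝒯.Nonempty ∧ (∀ T ∈ 𝒯, T.Minimal ∧ T.Cocompact) ∧
    (∀ T ∈ 𝒯, ∀ T' ∈ 𝒯, SameElliptics T T') ∧
    ∀ T ∈ 𝒯, ∀ T' : GTree G, T'.Minimal → T'.Cocompact → SameElliptics T T' → T' ∈ 𝒯

/-- `P`-equivariance of a relation between subsets of two `G`-trees. -/
def PEquivariant {G : Type} [Group G] (T Y : GTree G) (K : Set T.carrier) (L : Set Y.carrier)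
    (R : Set (T.carrier × Y.carrier)) (P : Finset G) : Prop :=
  ∀ g ∈ P, ∀ x y, (x, y) ∈ R → x ∈ K → g • x ∈ K → y ∈ L →
    g • y ∈ L ∧ (g • x, g • y) ∈ R

/-- An equivariant morphism of `G`-trees. -/
def IsGMorphism {G : Type} [Group G] (T T' : GTree G) (φ : T.carrier → T'.carrier) : Prop :=
  (∀ (g : G) (x : T.carrier), φ (g • x) = g • φ x) ∧ IsMorphism φ

/-- A basic open set for the Hausdorff–Gromov topology. -/
def basicOpen {G : Type} [Group G] (𝒯 : Set (GTree G)) (X : GTree G)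
    (K : Set X.carrier) (P : Finset G) (ε : ℝ) : Set {T : GTree G // T ∈ 𝒯} :=
  {Y | ∃ L : Set Y.1.carrier, IsCompact L ∧ ∃ R : Set (X.carrier × Y.1.carrier),
    IsClosed R ∧ IsApprox K L R ε ∧ PEquivariant X Y.1 K L R P}

/-- The Hausdorff–Gromov topology on a set of `G`-trees. -/
def HGtop {G : Type} [Group G] (𝒯 : Set (GTree G)) :
    TopologicalSpace {T : GTree G // T ∈ 𝒯} :=
  TopologicalSpace.generateFrom
    {U | ∃ X : GTree G, X ∈ 𝒯 ∧ ∃ K : Set X.carrier, IsCompact K ∧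
      ∃ P : Finset G, ∃ ε : ℝ, 0 < ε ∧ U = basicOpen 𝒯 X K P ε}

/-- The equivariant folding construction for a morphism of `G`-trees: the `G`-trees
`T_t = W_t/𝔉_t`, the class maps `[·]_t` and the induced morphisms `φ_{st}`. -/
structure GFoldData {G : Type} [Group G] (T T' : GTree G)
    (φ : T.carrier → T'.carrier) where
  tree : ℝ → GTree G
  cls : ∀ t : ℝ, T.carrier × T'.carrier → (tree t).carrier
  map : ∀ s t : ℝ, (tree s).carrier → (tree t).carrier
  surj : ∀ t : ℝ, 0 ≤ t → t ≤ 1 → ∀ q : (tree t).carrier, ∃ p ∈ Wset φ t, cls t p = q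
  eq_iff : ∀ t : ℝ, 0 ≤ t → t ≤ 1 → ∀ p ∈ Wset φ t, ∀ p' ∈ Wset φ t,
    (cls t p = cls t p' ↔ SameFiber φ t p p')
  dist_eq : ∀ t : ℝ, 0 ≤ t → t ≤ 1 → ∀ p ∈ Wset φ t, ∀ p' ∈ Wset φ t,
    ∀ γ : CornerPath φ t, γ.IsTaut p p' → dist (cls t p) (cls t p') = γ.length
  cls_equiv : ∀ t : ℝ, ∀ g : G, ∀ p : T.carrier × T'.carrier,
    cls t (g • p.1, g • p.2) = g • cls t p
  map_cls : ∀ s t : ℝ, 0 ≤ s → s ≤ t → t ≤ 1 → ∀ p ∈ Wset φ s,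
    map s t (cls s p) = cls t p
  mapMorph : ∀ s t : ℝ, 0 ≤ s → s ≤ t → t ≤ 1 →
    IsGMorphism (tree s) (tree t) (map s t)

/-- A morphism between two `G`-trees of `𝒯`. -/
structure MorphIn {G : Type} [Group G] (𝒯 : Set (GTree G)) where
  dom : GTree G
  cod : GTree G
  dom_mem : dom ∈ 𝒯
  cod_mem : cod ∈ 𝒯
  toFun : dom.carrier → cod.carrier
  morph : IsGMorphism dom cod toFun

/-- A basic open set for the Gromov–Hausdorff topology on maps. -/
def mapBasicOpen {G : Type} [Group G] {𝒯 : Set (GTree G)} (φ : MorphIn 𝒯)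
    (K : Set φ.dom.carrier) (K' : Set φ.cod.carrier) (P : Finset G) (ε : ℝ) :
    Set (MorphIn 𝒯) :=
  {ψ | ∃ L : Set ψ.dom.carrier, ∃ L' : Set ψ.cod.carrier,
    IsCompact L ∧ IsCompact L' ∧ ψ.toFun '' L ⊆ L' ∧
    ∃ R : Set (φ.dom.carrier × ψ.dom.carrier),
    ∃ R' : Set (φ.cod.carrier × ψ.cod.carrier),
      IsClosed R ∧ IsClosed R' ∧ IsApprox K L R ε ∧ IsApprox K' L' R' ε ∧
      PEquivariant φ.dom ψ.dom K L R P ∧ PEquivariant φ.cod ψ.cod K' L' R' P ∧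
      ∀ x y, (x, y) ∈ R → (φ.toFun x, ψ.toFun y) ∈ R'}

/-- The Gromov–Hausdorff topology on the space of morphisms `𝓜(𝒯)`. -/
def MorphTop {G : Type} [Group G] (𝒯 : Set (GTree G)) : TopologicalSpace (MorphIn 𝒯) :=
  TopologicalSpace.generateFrom
    {U | ∃ φ : MorphIn 𝒯, ∃ K : Set φ.dom.carrier, ∃ K' : Set φ.cod.carrier,
      IsCompact K ∧ IsCompact K' ∧ φ.toFun '' K ⊆ K' ∧
      ∃ P : Finset G, ∃ ε : ℝ, 0 < ε ∧ U = mapBasicOpen φ K K' P ε}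

/-- An equivariant map from `G` to a `G`-tree of `𝒯`. -/
structure EquivMapIn {G : Type} [Group G] (𝒯 : Set (GTree G)) where
  cod : GTree G
  cod_mem : cod ∈ 𝒯
  toFun : G → cod.carrier
  equivar : ∀ g h : G, toFun (g * h) = g • toFun h

/-- A basic open set for the topology on `ℰ(G,𝒯)`. -/
def eBasicOpen {G : Type} [Group G] {𝒯 : Set (GTree G)} (f : EquivMapIn 𝒯)
    (K : Set f.cod.carrier) (P : Finset G) (ε : ℝ) : Set (EquivMapIn 𝒯) :=
  {f' | ∃ L : Set f'.cod.carrier, IsCompact L ∧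
    ∃ R : Set (f.cod.carrier × f'.cod.carrier), IsClosed R ∧ IsApprox K L R ε ∧
      PEquivariant f.cod f'.cod K L R P ∧ ∀ g ∈ P, (f.toFun g, f'.toFun g) ∈ R}

/-- The topology on `ℰ(G,𝒯)`. -/
def ETop {G : Type} [Group G] (𝒯 : Set (GTree G)) : TopologicalSpace (EquivMapIn 𝒯) :=
  TopologicalSpace.generateFrom
    {U | ∃ f : EquivMapIn 𝒯, ∃ K : Set f.cod.carrier, IsCompact K ∧
      ∃ P : Finset G, (∀ g ∈ P, f.toFun g ∈ K) ∧
      ∃ ε : ℝ, 0 < ε ∧ U = eBasicOpen f K P ε}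

/-- A transverse map from the `G`-tree `T` to a `G`-tree of `𝒯`. -/
structure TransMapIn {G : Type} [Group G] (𝒯 : Set (GTree G)) (T : GTree G) where
  cod : GTree G
  cod_mem : cod ∈ 𝒯
  toFun : T.carrier → cod.carrier
  cont : Continuous toFun
  vert : ∀ v ∈ T.vertices, toFun v ∈ cod.vertices
  injEdge : ∀ u v : T.carrier, T.IsEdge u v → Set.InjOn toFun (seg u v)

/-- A basic open set for the topology on `𝒮(T,𝒯)`. -/
def sBasicOpen {G : Type} [Group G] {𝒯 : Set (GTree G)} {T : GTree G}
    (f : TransMapIn 𝒯 T) (K : Set T.carrier) (K' : Set f.cod.carrier)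
    (P : Finset G) (ε : ℝ) : Set (TransMapIn 𝒯 T) :=
  {f' | ∃ L : Set T.carrier, ∃ L' : Set f'.cod.carrier,
    IsCompact L ∧ IsCompact L' ∧ f'.toFun '' L ⊆ L' ∧
    ∃ R : Set (T.carrier × T.carrier), ∃ R' : Set (f.cod.carrier × f'.cod.carrier),
      IsClosed R ∧ IsClosed R' ∧ IsApprox K L R ε ∧ IsApprox K' L' R' ε ∧
      PEquivariant T T K L R P ∧ PEquivariant f.cod f'.cod K' L' R' P ∧
      ∀ x y, (x, y) ∈ R → (f.toFun x, f'.toFun y) ∈ R'}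

/-- The topology on `𝒮(T,𝒯)`. -/
def STop {G : Type} [Group G] (𝒯 : Set (GTree G)) (T : GTree G) :
    TopologicalSpace (TransMapIn 𝒯 T) :=
  TopologicalSpace.generateFrom
    {U | ∃ f : TransMapIn 𝒯 T, ∃ K : Set T.carrier, ∃ K' : Set f.cod.carrier,
      IsCompact K ∧ IsCompact K' ∧ f.toFun '' K ⊆ K' ∧
      ∃ P : Finset G, ∃ ε : ℝ, 0 < ε ∧ U = sBasicOpen f K K' P ε}

/-- `G`-equivariantly homeomorphic `G`-trees. -/
def EquivHomeo {G : Type} [Group G] (T T' : GTree G) : Prop :=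
  ∃ f : T.carrier ≃ T'.carrier, (∀ (g : G) (x : T.carrier), f (g • x) = g • f x) ∧
    Continuous f ∧ Continuous f.symm

/-- Two `G`-trees are homothetic: related by an equivariant homothety. -/
def Homothetic {G : Type} [Group G] (T T' : GTree G) : Prop :=
  ∃ (r : ℝ) (f : T.carrier ≃ T'.carrier), 0 < r ∧
    (∀ (g : G) (x : T.carrier), f (g • x) = g • f x) ∧
    ∀ x y : T.carrier, dist (f x) (f y) = r * dist x y

/- ==== auxiliary lemmas ==== -/

section Aux

variable {X : Type} [MetricSpace X]

lemma self_mem_seg (x y : X) : x ∈ seg x y := by simp [seg]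

lemma right_mem_seg (x y : X) : y ∈ seg x y := by simp [seg]

lemma seg_dist' (h4 : ∀ a b c d : X, dist a b + dist c d ≤
      max (dist a c + dist b d) (dist a d + dist b c))
    {A B q q' : X} (hq : q ∈ seg A B) (hq' : q' ∈ seg A B)
    (hle : dist A q ≤ dist A q') : dist q q' = dist A q' - dist A q := by
  have hq1 : dist A q + dist q B = dist A B := hq
  have hq2 : dist A q' + dist q' B = dist A B := hq'
  have ht : dist A q' ≤ dist A q + dist q q' := dist_triangle A q q'
  have h4i := h4 q q' A B
  have hc1 : dist q A = dist A q := dist_comm _ _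
  have hc2 : dist q' A = dist A q' := dist_comm _ _
  have hmax : max (dist q A + dist q' B) (dist q B + dist q' A) ≤
      dist A B + (dist A q' - dist A q) := by
    apply max_le <;> linarith
  have h5 := le_trans h4i hmax
  linarith

lemma seg_unique (h4 : ∀ a b c d : X, dist a b + dist c d ≤
      max (dist a c + dist b d) (dist a d + dist b c))
    {A B q q' : X} (hq : q ∈ seg A B) (hq' : q' ∈ seg A B)
    (heq : dist A q = dist A q') : q = q' := by
  have := seg_dist' h4 hq hq' heq.le
  have : dist q q' = 0 := by linarith
  exact dist_eq_zero.mp this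

lemma seg_sub (h4 : ∀ a b c d : X, dist a b + dist c d ≤
      max (dist a c + dist b d) (dist a d + dist b c))
    {A B q c : X} (hq : q ∈ seg A B) (hc : c ∈ seg A B)
    (hle : dist A q ≤ dist A c) : q ∈ seg A c := by
  have h := seg_dist' h4 hq hc hle
  show dist A q + dist q c = dist A c
  linarith

/-- Branch lemma: if the "projection parameters" of `q` and `q'` onto `[A,B]` differ,
then `q` is within `2 dist q q'` of the segment. -/
lemma branch (h4 : ∀ a b c d : X, dist a b + dist c d ≤
      max (dist a c + dist b d) (dist a d + dist b c))
    {A B q q' : X} (hne : dist A q - dist q B ≠ dist A q' - dist q' B) :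
    dist A q + dist q B - dist A B ≤ 2 * dist q q' := by
  have hc1 : dist q A = dist A q := dist_comm _ _
  have hc2 : dist q' A = dist A q' := dist_comm _ _
  have hc3 : dist B q' = dist q' B := dist_comm _ _
  have hc4 : dist B q = dist q B := dist_comm _ _
  have hc5 : dist A B = dist B A := dist_comm _ _
  have ht1 : dist q' B ≤ dist q' q + dist q B := dist_triangle _ _ _
  have ht2 : dist q B ≤ dist q q' + dist q' B := dist_triangle _ _ _
  have ht3 : dist A q ≤ dist A q' + dist q' q := dist_triangle _ _ _
  have hcq : dist q' q = dist q q' := dist_comm _ _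
  rcases lt_trichotomy (dist A q + dist q' B) (dist A q' + dist q B) with h | h | h
  · have h4i := h4 q' A B q
    rcases le_max_iff.mp h4i with h' | h' <;> linarith
  · exact absurd (by linarith) hne
  · have h4i := h4 q A B q'
    rcases le_max_iff.mp h4i with h' | h' <;> linarith

lemma bounded_of_fst (h : IsFiniteSimpTree X) : ∃ C : ℝ, ∀ a b : X, dist a b ≤ C := by
  obtain ⟨_, V, hVfin, ⟨v0, hv0⟩, hcov⟩ := h
  obtain ⟨C0, hC0⟩ := ((hVfin.prod hVfin).image
    (fun p : X × X => dist p.1 p.2)).bddAbove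
  have hC0' : ∀ u ∈ V, ∀ v ∈ V, dist u v ≤ C0 := by
    intro u hu v hv
    exact hC0 ⟨(u, v), ⟨hu, hv⟩, rfl⟩
  have hb : ∀ a : X, dist v0 a ≤ 2 * C0 := by
    intro a
    obtain ⟨u, hu, v, hv, ha⟩ := hcov a
    have h1 : dist u a + dist a v = dist u v := ha
    have h2 : dist u a ≤ dist u v := by
      have := dist_nonneg (x := a) (y := v); linarith
    calc dist v0 a ≤ dist v0 u + dist u a := dist_triangle _ _ _
      _ ≤ C0 + C0 := add_le_add (hC0' v0 hv0 u hu) (h2.trans (hC0' u hu v hv))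
      _ = 2 * C0 := by ring
  exact ⟨4 * C0, fun a b => by
    calc dist a b ≤ dist a v0 + dist v0 b := dist_triangle _ _ _
      _ ≤ 2 * C0 + 2 * C0 := add_le_add (by rw [dist_comm]; exact hb a) (hb b)
      _ = 4 * C0 := by ring⟩

end Aux

/-- Key geometric lemma: for a morphism `φ` from a tree, the image of any point of a
segment is `m(φ)`-close to the segment between the images of the endpoints. -/
lemma key_lemma {X X' : Type} [MetricSpace X] [MetricSpace X']
    (hXt : IsTreeSpace X)
    (h4' : ∀ a b c d : X', dist a b + dist c d ≤
      max (dist a c + dist b d) (dist a d + dist b c))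
    (φ : X → X') (hφ : IsMorphism φ)
    (hbdd : BddAbove {r : ℝ | ∃ x x' z : X, φ x = φ x' ∧ z ∈ seg x x' ∧
      r = dist (φ z) (φ x)})
    {x x' z : X} (hz : z ∈ seg x x') :
    dist (φ x) (φ z) + dist (φ x') (φ z) - dist (φ x) (φ x') ≤ 2 * mFold φ := by
  obtain ⟨⟨x0⟩, hgeo, h4⟩ := hXt
  have hm0 : 0 ≤ mFold φ :=
    le_csSup hbdd ⟨x0, x0, x0, rfl, self_mem_seg _ _, (dist_self _).symm⟩
  set L := dist x x' with hL
  set tz := dist x z with htz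
  have hz1 : dist x z + dist z x' = L := hz
  have htz0 : 0 ≤ tz := dist_nonneg
  have htzL : tz ≤ L := by have := dist_nonneg (x := z) (y := x'); linarith
  -- the geodesic parametrization
  have hγex : ∀ s : ℝ, 0 ≤ s ∧ s ≤ L → ∃ w : X, dist x w = s ∧ dist w x' = L - s :=
    fun s hs => hgeo x x' s hs.1 hs.2
  set γ : ℝ → X := fun s => if h : 0 ≤ s ∧ s ≤ L then (hγex s h).choose else x with hγ
  have hγ1 : ∀ s : ℝ, 0 ≤ s → s ≤ L → dist x (γ s) = s ∧ dist (γ s) x' = L - s := by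
    intro s h1 h2
    simp only [hγ, dif_pos (⟨h1, h2⟩ : 0 ≤ s ∧ s ≤ L)]
    exact (hγex s ⟨h1, h2⟩).choose_spec
  clear_value γ
  have hγseg : ∀ s : ℝ, 0 ≤ s → s ≤ L → γ s ∈ seg x x' := by
    intro s h1 h2
    obtain ⟨e1, e2⟩ := hγ1 s h1 h2
    show dist x (γ s) + dist (γ s) x' = dist x x'
    rw [e1, e2, ← hL]; ring
  have hγz : γ tz = z :=
    seg_unique h4 (hγseg tz htz0 htzL) hz ((hγ1 tz htz0 htzL).1.trans htz)
  have hγ0 : γ 0 = x := by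
    refine seg_unique h4 (hγseg 0 le_rfl (htz0.trans htzL)) (self_mem_seg x x') ?_
    rw [(hγ1 0 le_rfl (htz0.trans htzL)).1, dist_self]
  have hγL : γ L = x' := by
    refine seg_unique h4 (hγseg L (htz0.trans htzL) le_rfl) (right_mem_seg x x') ?_
    rw [(hγ1 L (htz0.trans htzL) le_rfl).1, ← hL]
  set f : ℝ → X' := fun s => φ (γ s) with hf
  have hfdef : ∀ s, f s = φ (γ s) := fun s => rfl
  -- continuity of f on [0, L]
  have hcont : ∀ s0 : ℝ, 0 ≤ s0 → s0 ≤ L → ∀ ε : ℝ, 0 < ε → ∃ δ : ℝ, 0 < δ ∧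
      ∀ s : ℝ, 0 ≤ s → s ≤ L → |s - s0| < δ → dist (f s) (f s0) < ε := by
    intro s0 hs00 hs0L ε hε
    have hr : ∃ ρ : ℝ, 0 < ρ ∧ ∀ s : ℝ, s0 ≤ s → s ≤ L → s - s0 ≤ ρ →
        dist (f s) (f s0) = s - s0 := by
      rcases lt_or_eq_of_le hs0L with hlt | heq
      · have hne : γ s0 ≠ x' := by
          intro h
          have := (hγ1 s0 hs00 hs0L).2
          rw [h, dist_self] at this; linarith
        obtain ⟨c, hcseg, hcne, hiso⟩ := hφ (γ s0) x' hne
        refine ⟨dist (γ s0) c, dist_pos.mpr (Ne.symm hcne), ?_⟩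
        intro s hs1 hs2 hs3
        have hd : dist (γ s0) (γ s) = s - s0 := by
          have h := seg_dist' h4 (hγseg s0 hs00 hs0L) (hγseg s (hs00.trans hs1) hs2)
            (by rw [(hγ1 s0 hs00 hs0L).1, (hγ1 s (hs00.trans hs1) hs2).1]; exact hs1)
          rw [(hγ1 s0 hs00 hs0L).1, (hγ1 s (hs00.trans hs1) hs2).1] at h
          exact h
        have hsgs : γ s ∈ seg (γ s0) x' := by
          show dist (γ s0) (γ s) + dist (γ s) x' = dist (γ s0) x'
          rw [hd, (hγ1 s (hs00.trans hs1) hs2).2, (hγ1 s0 hs00 hs0L).2]; ring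
        have hsub : γ s ∈ seg (γ s0) c := by
          refine seg_sub h4 hsgs hcseg ?_
          rw [hd]; exact hs3
        have h0 : γ s0 ∈ seg (γ s0) c := self_mem_seg _ _
        have hi := hiso (γ s) hsub (γ s0) h0
        rw [hfdef s, hfdef s0, hi, dist_comm (γ s) (γ s0), hd]
      · exact ⟨1, one_pos, fun s hs1 hs2 _ => by
          have he : s = s0 := le_antisymm (heq ▸ hs2) hs1
          rw [he, dist_self]; linarith⟩
    have hl : ∃ ρ : ℝ, 0 < ρ ∧ ∀ s : ℝ, 0 ≤ s → s ≤ s0 → s0 - s ≤ ρ →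
        dist (f s) (f s0) = s0 - s := by
      rcases lt_or_eq_of_le hs00 with hlt | heq
      · have hne : γ s0 ≠ x := by
          intro h
          have := (hγ1 s0 hs00 hs0L).1
          rw [h, dist_self] at this; linarith
        obtain ⟨c, hcseg, hcne, hiso⟩ := hφ (γ s0) x hne
        refine ⟨dist (γ s0) c, dist_pos.mpr (Ne.symm hcne), ?_⟩
        intro s hs1 hs2 hs3
        have hd : dist (γ s0) (γ s) = s0 - s := by
          have h := seg_dist' h4 (hγseg s hs1 (hs2.trans hs0L)) (hγseg s0 hs00 hs0L)
            (by rw [(hγ1 s0 hs00 hs0L).1, (hγ1 s hs1 (hs2.trans hs0L)).1]; exact hs2)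
          rw [(hγ1 s0 hs00 hs0L).1, (hγ1 s hs1 (hs2.trans hs0L)).1] at h
          rw [dist_comm]; exact h
        have hsgs : γ s ∈ seg (γ s0) x := by
          show dist (γ s0) (γ s) + dist (γ s) x = dist (γ s0) x
          rw [hd, dist_comm (γ s) x, (hγ1 s hs1 (hs2.trans hs0L)).1,
            dist_comm (γ s0) x, (hγ1 s0 hs00 hs0L).1]; ring
        have hsub : γ s ∈ seg (γ s0) c := by
          refine seg_sub h4 hsgs hcseg ?_
          rw [hd]; exact hs3
        have hi := hiso (γ s) hsub (γ s0) (self_mem_seg _ _)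
        rw [hfdef s, hfdef s0, hi, dist_comm (γ s) (γ s0), hd]
      · exact ⟨1, one_pos, fun s hs1 hs2 _ => by
          have he : s = s0 := le_antisymm hs2 (heq ▸ hs1)
          rw [he, dist_self]; linarith⟩
    obtain ⟨ρr, hρr, hrr⟩ := hr
    obtain ⟨ρl, hρl, hll⟩ := hl
    refine ⟨min (min ρr ρl) ε, by positivity, ?_⟩
    intro s hs1 hs2 hs3
    have hm1 := min_le_left (min ρr ρl) ε
    have hm2 := min_le_left ρr ρl
    have hm3 := min_le_right ρr ρl
    have hm4 := min_le_right (min ρr ρl) ε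
    have habs := abs_lt.mp hs3
    rcases le_total s0 s with h | h
    · have h1 : s - s0 ≤ ρr := by linarith [habs.2]
      rw [hrr s h hs2 h1]
      linarith [habs.2]
    · have h1 : s0 - s ≤ ρl := by linarith [habs.1]
      rw [hll s hs1 h h1]
      linarith [habs.1]
  clear_value f
  -- the functions F and G
  set A := φ x with hA
  set B := φ x' with hB
  clear_value A B
  set L' := dist A B with hL'
  clear_value L'
  set F : ℝ → ℝ := fun s => dist (f s) A + dist (f s) B - L' with hF
  set G : ℝ → ℝ := fun s => dist (f s) A - dist (f s) B with hG
  have hFdef : ∀ s, F s = dist (f s) A + dist (f s) B - L' := fun s => rfl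
  have hGdef : ∀ s, G s = dist (f s) A - dist (f s) B := fun s => rfl
  clear_value F G
  have hFnn : ∀ s, 0 ≤ F s := by
    intro s
    rw [hFdef, hL']
    have h := dist_triangle A (f s) B
    have hc : dist A (f s) = dist (f s) A := dist_comm _ _
    linarith
  have hf0 : f 0 = A := by rw [hfdef, hγ0, hA]
  have hF0 : F 0 = 0 := by rw [hFdef, hf0, dist_self, hL']; ring
  have hFlip : ∀ s s', |F s - F s'| ≤ 2 * dist (f s) (f s') := by
    intro s s'
    have h1 := abs_dist_sub_le (f s) (f s') A
    have h2 := abs_dist_sub_le (f s) (f s') B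
    rw [abs_le] at h1 h2 ⊢
    rw [hFdef, hFdef]
    constructor
    · linarith [h1.1, h2.1]
    · linarith [h1.2, h2.2]
  have hGlip : ∀ s s', |G s - G s'| ≤ 2 * dist (f s) (f s') := by
    intro s s'
    have h1 := abs_dist_sub_le (f s) (f s') A
    have h2 := abs_dist_sub_le (f s) (f s') B
    rw [abs_le] at h1 h2 ⊢
    rw [hGdef, hGdef]
    constructor
    · linarith [h1.1, h2.2]
    · linarith [h1.2, h2.1]
  have hfL : f L = B := by rw [hfdef, hγL, hB]
  have hFL : F L = 0 := by rw [hFdef, hfL, dist_self, dist_comm B A, hL']; ring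
  set D := F tz with hD
  clear_value D
  have hfz : f tz = φ z := by rw [hfdef, hγz]
  have hgoal : dist A (φ z) + dist B (φ z) - L' = D := by
    rw [hD, hFdef, hfz, dist_comm (φ z) A, dist_comm (φ z) B]
  rw [hgoal]
  rcases le_or_gt D 0 with hD0 | hD0
  · linarith
  -- t1 and t2
  set S1 : Set ℝ := {s | 0 ≤ s ∧ s ≤ tz ∧ F s = 0} with hS1
  have hS1ne : (0 : ℝ) ∈ S1 := ⟨le_rfl, htz0, hF0⟩
  have hS1bdd : BddAbove S1 := ⟨tz, fun s hs => hs.2.1⟩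
  set t1 := sSup S1 with ht1
  clear_value t1
  have ht10 : 0 ≤ t1 := by rw [ht1]; exact le_csSup hS1bdd hS1ne
  have ht1z : t1 ≤ tz := by rw [ht1]; exact csSup_le ⟨0, hS1ne⟩ fun s hs => hs.2.1
  have ht1L : t1 ≤ L := ht1z.trans htzL
  have hS1le : ∀ s ∈ S1, s ≤ t1 := by
    intro s hs; rw [ht1]; exact le_csSup hS1bdd hs
  have hFt1 : F t1 = 0 := by
    by_contra h
    have hη : 0 < F t1 := lt_of_le_of_ne (hFnn t1) (Ne.symm h)
    obtain ⟨δ, hδ, hδ'⟩ := hcont t1 ht10 ht1L (F t1 / 4) (by linarith)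
    have hub : ∀ s ∈ S1, s ≤ t1 - δ := by
      intro s hs
      by_contra h'
      push_neg at h'
      have hsle : s ≤ t1 := hS1le s hs
      have habs : |s - t1| < δ := by rw [abs_lt]; constructor <;> linarith
      have hds := hδ' s hs.1 (hs.2.1.trans htzL) habs
      have hlp := hFlip s t1
      rw [hs.2.2, zero_sub, abs_neg, abs_of_pos hη] at hlp
      linarith
    have hc := csSup_le ⟨0, hS1ne⟩ hub
    rw [← ht1] at hc
    linarith
  have ht1z' : t1 < tz := by
    rcases lt_or_eq_of_le ht1z with h | h
    · exact h
    · exfalso; rw [h] at hFt1; rw [← hD] at hFt1; linarith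
  have hFpos1 : ∀ s, t1 < s → s ≤ tz → 0 < F s := by
    intro s h1 h2
    rcases lt_or_eq_of_le (hFnn s) with h | h
    · exact h
    · exfalso
      have hmem : s ∈ S1 := ⟨ht10.trans h1.le, h2, h.symm⟩
      exact absurd (hS1le s hmem) (not_le.mpr h1)
  set S2 : Set ℝ := {s | tz ≤ s ∧ s ≤ L ∧ F s = 0} with hS2
  have hS2ne : L ∈ S2 := ⟨htzL, le_rfl, hFL⟩
  have hS2bdd : BddBelow S2 := ⟨tz, fun s hs => hs.1⟩
  set t2 := sInf S2 with ht2
  clear_value t2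
  have ht2z : tz ≤ t2 := by rw [ht2]; exact le_csInf ⟨L, hS2ne⟩ fun s hs => hs.1
  have ht2L : t2 ≤ L := by rw [ht2]; exact csInf_le hS2bdd hS2ne
  have ht20 : 0 ≤ t2 := htz0.trans ht2z
  have hS2le : ∀ s ∈ S2, t2 ≤ s := by
    intro s hs; rw [ht2]; exact csInf_le hS2bdd hs
  have hFt2 : F t2 = 0 := by
    by_contra h
    have hη : 0 < F t2 := lt_of_le_of_ne (hFnn t2) (Ne.symm h)
    obtain ⟨δ, hδ, hδ'⟩ := hcont t2 ht20 ht2L (F t2 / 4) (by linarith)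
    have hlb : ∀ s ∈ S2, t2 + δ ≤ s := by
      intro s hs
      by_contra h'
      push_neg at h'
      have hsge : t2 ≤ s := hS2le s hs
      have habs : |s - t2| < δ := by rw [abs_lt]; constructor <;> linarith
      have hds := hδ' s (htz0.trans hs.1) hs.2.1 habs
      have hlp := hFlip s t2
      rw [hs.2.2, zero_sub, abs_neg, abs_of_pos hη] at hlp
      linarith
    have hc := le_csInf ⟨L, hS2ne⟩ hlb
    rw [← ht2] at hc
    linarith
  have ht2z' : tz < t2 := by
    rcases lt_or_eq_of_le ht2z with h | h
    · exact h
    · exfalso; rw [← h] at hFt2; rw [← hD] at hFt2; linarith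
  have hFpos2 : ∀ s, tz ≤ s → s < t2 → 0 < F s := by
    intro s h1 h2
    rcases lt_or_eq_of_le (hFnn s) with h | h
    · exact h
    · exfalso
      have hmem : s ∈ S2 := ⟨h1, (le_of_lt h2).trans ht2L, h.symm⟩
      exact absurd (hS2le s hmem) (not_le.mpr h2)
  -- G is locally constant where F > 0
  have hbranch : ∀ s s', 2 * dist (f s) (f s') < F s → G s = G s' := by
    intro s s' hd
    by_contra h
    have hne : dist A (f s) - dist (f s) B ≠ dist A (f s') - dist (f s') B := by
      intro heq
      apply h
      rw [hGdef, hGdef, dist_comm (f s) A, dist_comm (f s') A]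
      linarith
    have hb := branch h4' hne
    have hc1 : dist A (f s) = dist (f s) A := dist_comm _ _
    rw [hFdef, hL'] at hd
    linarith
  have hGconst1 : G t1 = G tz := by
    set C : Set ℝ := {s | t1 ≤ s ∧ s ≤ tz ∧ G s = G tz} with hC
    have hCne : tz ∈ C := ⟨ht1z, le_rfl, rfl⟩
    have hCbdd : BddBelow C := ⟨t1, fun s hs => hs.1⟩
    set c := sInf C with hc
    clear_value c
    have hct1 : t1 ≤ c := by rw [hc]; exact le_csInf ⟨tz, hCne⟩ fun s hs => hs.1
    have hctz : c ≤ tz := by rw [hc]; exact csInf_le hCbdd hCne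
    have hCle : ∀ s ∈ C, c ≤ s := by
      intro s hs; rw [hc]; exact csInf_le hCbdd hs
    have hc0 : 0 ≤ c := ht10.trans hct1
    have hcL : c ≤ L := hctz.trans htzL
    have hGc : G c = G tz := by
      by_contra h
      have hη : 0 < |G c - G tz| := abs_pos.mpr (sub_ne_zero.mpr h)
      obtain ⟨δ, hδ, hδ'⟩ := hcont c hc0 hcL (|G c - G tz| / 4) (by linarith)
      have hlb : ∀ s ∈ C, c + δ ≤ s := by
        intro s hs
        by_contra h'
        push_neg at h'
        have hsge : c ≤ s := hCle s hs
        have habs : |s - c| < δ := by rw [abs_lt]; constructor <;> linarith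
        have hds := hδ' s (ht10.trans hs.1) (hs.2.1.trans htzL) habs
        have hlp := hGlip s c
        rw [hs.2.2, abs_sub_comm (G tz) (G c)] at hlp
        linarith
      have hcc := le_csInf ⟨tz, hCne⟩ hlb
      rw [← hc] at hcc
      linarith
    rcases eq_or_lt_of_le hct1 with h | h
    · rw [h]; exact hGc
    · exfalso
      have hFc : 0 < F c := hFpos1 c h hctz
      obtain ⟨δ, hδ, hδ'⟩ := hcont c hc0 hcL (F c / 4) (by linarith)
      set s := max ((t1 + c) / 2) (c - δ / 2) with hsdef
      have hs1 : t1 < s := lt_of_lt_of_le (by linarith) (le_max_left _ _)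
      have hs2 : s < c := max_lt (by linarith) (by linarith)
      have hs3 : c - δ / 2 ≤ s := le_max_right _ _
      clear_value s
      have hs0 : 0 ≤ s := ht10.trans hs1.le
      have hsz : s ≤ tz := hs2.le.trans hctz
      have hsL : s ≤ L := hsz.trans htzL
      have habs : |s - c| < δ := by rw [abs_lt]; constructor <;> linarith
      have hds := hδ' s hs0 hsL habs
      have hGs : G c = G s := by
        apply hbranch c s
        rw [dist_comm (f c) (f s)]
        linarith
      have hmem : s ∈ C := ⟨hs1.le, hsz, hGs.symm.trans hGc⟩
      have := hCle s hmem
      linarith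
  have hGconst2 : G t2 = G tz := by
    set C : Set ℝ := {s | tz ≤ s ∧ s ≤ t2 ∧ G s = G tz} with hC
    have hCne : tz ∈ C := ⟨le_rfl, ht2z, rfl⟩
    have hCbdd : BddAbove C := ⟨t2, fun s hs => hs.2.1⟩
    set c := sSup C with hc
    clear_value c
    have hctz : tz ≤ c := by rw [hc]; exact le_csSup hCbdd hCne
    have hct2 : c ≤ t2 := by rw [hc]; exact csSup_le ⟨tz, hCne⟩ fun s hs => hs.2.1
    have hCle : ∀ s ∈ C, s ≤ c := by
      intro s hs; rw [hc]; exact le_csSup hCbdd hs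
    have hc0 : 0 ≤ c := htz0.trans hctz
    have hcL : c ≤ L := hct2.trans ht2L
    have hGc : G c = G tz := by
      by_contra h
      have hη : 0 < |G c - G tz| := abs_pos.mpr (sub_ne_zero.mpr h)
      obtain ⟨δ, hδ, hδ'⟩ := hcont c hc0 hcL (|G c - G tz| / 4) (by linarith)
      have hub : ∀ s ∈ C, s ≤ c - δ := by
        intro s hs
        by_contra h'
        push_neg at h'
        have hsle : s ≤ c := hCle s hs
        have habs : |s - c| < δ := by rw [abs_lt]; constructor <;> linarith
        have hds := hδ' s (htz0.trans hs.1) (hs.2.1.trans ht2L) habs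
        have hlp := hGlip s c
        rw [hs.2.2, abs_sub_comm (G tz) (G c)] at hlp
        linarith
      have hcc := csSup_le ⟨tz, hCne⟩ hub
      rw [← hc] at hcc
      linarith
    rcases eq_or_lt_of_le hct2 with h | h
    · rw [← h]; exact hGc
    · exfalso
      have hFc : 0 < F c := hFpos2 c hctz h
      obtain ⟨δ, hδ, hδ'⟩ := hcont c hc0 hcL (F c / 4) (by linarith)
      set s := min ((t2 + c) / 2) (c + δ / 2) with hsdef
      have hs1 : s < t2 := lt_of_le_of_lt (min_le_left _ _) (by linarith)
      have hs2 : c < s := lt_min (by linarith) (by linarith)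
      have hs3 : s ≤ c + δ / 2 := min_le_right _ _
      clear_value s
      have hsz : tz ≤ s := hctz.trans hs2.le
      have hs0 : 0 ≤ s := htz0.trans hsz
      have hsL : s ≤ L := hs1.le.trans ht2L
      have habs : |s - c| < δ := by rw [abs_lt]; constructor <;> linarith
      have hds := hδ' s hs0 hsL habs
      have hGs : G c = G s := by
        apply hbranch c s
        rw [dist_comm (f c) (f s)]
        linarith
      have hmem : s ∈ C := ⟨hsz, hs1.le, hGs.symm.trans hGc⟩
      have := hCle s hmem
      linarith
  -- conclude: f t1 = f t2
  have hFt1' : dist (f t1) A + dist (f t1) B - L' = 0 := by rw [← hFdef]; exact hFt1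
  have hFt2' : dist (f t2) A + dist (f t2) B - L' = 0 := by rw [← hFdef]; exact hFt2
  have hq1 : f t1 ∈ seg A B := by
    show dist A (f t1) + dist (f t1) B = dist A B
    rw [dist_comm A (f t1), ← hL']
    linarith
  have hq2 : f t2 ∈ seg A B := by
    show dist A (f t2) + dist (f t2) B = dist A B
    rw [dist_comm A (f t2), ← hL']
    linarith
  have hfeq : f t1 = f t2 := by
    apply seg_unique h4' hq1 hq2
    have e1 : dist A (f t1) + dist (f t1) B = dist A B := hq1
    have e2 : dist A (f t2) + dist (f t2) B = dist A B := hq2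
    have e3 := hGconst1.trans hGconst2.symm
    rw [hGdef, hGdef] at e3
    have c1 : dist (f t1) A = dist A (f t1) := dist_comm _ _
    have c2 : dist (f t2) A = dist A (f t2) := dist_comm _ _
    linarith
  -- build the fold
  have hγt1 := hγ1 t1 ht10 ht1L
  have hγt2 := hγ1 t2 ht20 ht2L
  have hd1 : dist (γ t1) z = tz - t1 := by
    have h := seg_dist' h4 (hγseg t1 ht10 ht1L) hz
      (by rw [hγt1.1, ← htz]; exact ht1z)
    rw [hγt1.1, ← htz] at h
    exact h
  have hd2 : dist z (γ t2) = t2 - tz := by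
    have h := seg_dist' h4 hz (hγseg t2 ht20 ht2L)
      (by rw [hγt2.1, ← htz]; exact ht2z)
    rw [hγt2.1, ← htz] at h
    exact h
  have hd3 : dist (γ t1) (γ t2) = t2 - t1 := by
    have h := seg_dist' h4 (hγseg t1 ht10 ht1L) (hγseg t2 ht20 ht2L)
      (by rw [hγt1.1, hγt2.1]; linarith)
    rw [hγt1.1, hγt2.1] at h
    exact h
  have hzseg : z ∈ seg (γ t1) (γ t2) := by
    show dist (γ t1) z + dist z (γ t2) = dist (γ t1) (γ t2)
    rw [hd1, hd2, hd3]; ring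
  have hfeq' : φ (γ t1) = φ (γ t2) := by rw [← hfdef, ← hfdef]; exact hfeq
  have hfold : dist (φ z) (φ (γ t1)) ≤ mFold φ :=
    le_csSup hbdd ⟨γ t1, γ t2, z, hfeq', hzseg, rfl⟩
  -- D ≤ 2 * dist (φ z) (φ (γ t1))
  have hDle : D ≤ 2 * dist (φ z) (φ (γ t1)) := by
    have h1 : dist (f tz) A ≤ dist (f tz) (f t1) + dist (f t1) A := dist_triangle _ _ _
    have h2 : dist (f tz) B ≤ dist (f tz) (f t1) + dist (f t1) B := dist_triangle _ _ _
    have e1 : dist A (f t1) + dist (f t1) B = dist A B := hq1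
    have c1 : dist (f t1) A = dist A (f t1) := dist_comm _ _
    have hDe : D = dist (f tz) A + dist (f tz) B - L' := by rw [hD, hFdef]
    have hft : dist (f tz) (f t1) = dist (φ z) (φ (γ t1)) := by
      rw [hfz, hfdef]
    rw [hL'] at hDe
    linarith
  linarith

/-- nonemptiness of the fold set -/
lemma foldset_zero {X X' : Type} [MetricSpace X] [MetricSpace X'] (φ : X → X')
    (x0 : X) : (0 : ℝ) ∈ {r : ℝ | ∃ x x' z : X, φ x = φ x' ∧ z ∈ seg x x' ∧
      r = dist (φ z) (φ x)} :=
  ⟨x0, x0, x0, rfl, self_mem_seg _ _, (dist_self _).symm⟩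


/-- For a morphism φ of finite simplicial trees and every ε > 0 there is
δ > 0 such that any morphism ψ which is δ-approximated to φ satisfies
|m(φ) − m(ψ)| < ε. -/
theorem stmt_4 {X X' : Type} [MetricSpace X] [MetricSpace X']
    (hX : IsFiniteSimpTree X) (hX' : IsFiniteSimpTree X')
    (φ : X → X') (hφ : IsMorphism φ) :
    ∀ ε : ℝ, 0 < ε → ∃ δ : ℝ, 0 < δ ∧
      ∀ (Y Y' : Type) [MetricSpace Y] [MetricSpace Y'],
        IsFiniteSimpTree Y → IsFiniteSimpTree Y' →
        ∀ ψ : Y → Y', IsMorphism ψ →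
        ∀ (R : Set (X × Y)) (R' : Set (X' × Y')), MapApprox φ ψ R R' δ →
        |mFold φ - mFold ψ| < ε := by
  intro ε hε
  refine ⟨ε / 2, by linarith, ?_⟩
  intro Y Y' _ _ hY hY' ψ hψ R R' hA
  obtain ⟨hR, hR', hRfull, hR'full, hmap⟩ := hA
  obtain ⟨C', hC'⟩ := bounded_of_fst hX'
  obtain ⟨CY', hCY'⟩ := bounded_of_fst hY'
  have hbddφ : BddAbove {r : ℝ | ∃ x x' z : X, φ x = φ x' ∧ z ∈ seg x x' ∧
      r = dist (φ z) (φ x)} := by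
    refine ⟨C', ?_⟩
    rintro r ⟨x, x', z, _, _, rfl⟩
    exact hC' _ _
  have hbddψ : BddAbove {r : ℝ | ∃ y y' w : Y, ψ y = ψ y' ∧ w ∈ seg y y' ∧
      r = dist (ψ w) (ψ y)} := by
    refine ⟨CY', ?_⟩
    rintro r ⟨y, y', w, _, _, rfl⟩
    exact hCY' _ _
  obtain ⟨x0⟩ := hX.1.1
  obtain ⟨y0⟩ := hY.1.1
  set δ := ε / 2 with hδ
  -- claim 1 : mFold ψ ≤ mFold φ + 3δ/2
  have claim1 : mFold ψ ≤ mFold φ + 3 * δ / 2 := by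
    apply csSup_le ⟨0, foldset_zero ψ y0⟩
    rintro r ⟨y, y', w, hyy, hw, rfl⟩
    obtain ⟨x, hx⟩ := hR.2.2.1 y (mem_univ _)
    obtain ⟨x', hx'⟩ := hR.2.2.1 y' (mem_univ _)
    obtain ⟨z, hzseg, hz⟩ := (hRfull hx hx').2 w hw
    have hkey := key_lemma hX.1 hX'.1.2.2 φ hφ hbddφ hzseg
    have h1 := hR'.2.2.2 (hmap _ _ hx) (hmap _ _ hx')
    have h2 := hR'.2.2.2 (hmap _ _ hz) (hmap _ _ hx)
    have h3 := hR'.2.2.2 (hmap _ _ hz) (hmap _ _ hx')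
    rw [show dist (ψ y) (ψ y') = 0 from by rw [hyy, dist_self]] at h1
    rw [abs_lt] at h1 h2 h3
    have hww' : dist (ψ w) (ψ y') = dist (ψ w) (ψ y) := by rw [hyy]
    rw [hww'] at h3
    have e2 : dist (φ z) (φ x) = dist (φ x) (φ z) := dist_comm _ _
    have e3 : dist (φ z) (φ x') = dist (φ x') (φ z) := dist_comm _ _
    rw [e2] at h2; rw [e3] at h3
    linarith [h1.2, h2.1, h3.1]
  -- claim 2 : mFold φ ≤ mFold ψ + 3δ/2
  have claim2 : mFold φ ≤ mFold ψ + 3 * δ / 2 := by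
    apply csSup_le ⟨0, foldset_zero φ x0⟩
    rintro r ⟨x, x', z, hxx, hz, rfl⟩
    obtain ⟨y, hy⟩ := hR.2.1 x (mem_univ _)
    obtain ⟨y', hy'⟩ := hR.2.1 x' (mem_univ _)
    obtain ⟨w, hwseg, hw⟩ := (hRfull hy hy').1 z hz
    have hkey := key_lemma hY.1 hY'.1.2.2 ψ hψ hbddψ hwseg
    have h1 := hR'.2.2.2 (hmap _ _ hy) (hmap _ _ hy')
    have h2 := hR'.2.2.2 (hmap _ _ hw) (hmap _ _ hy)
    have h3 := hR'.2.2.2 (hmap _ _ hw) (hmap _ _ hy')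
    rw [show dist (φ x) (φ x') = 0 from by rw [hxx, dist_self]] at h1
    rw [abs_lt] at h1 h2 h3
    have hzz' : dist (φ z) (φ x') = dist (φ z) (φ x) := by rw [hxx]
    rw [hzz'] at h3
    have e2 : dist (ψ w) (ψ y) = dist (ψ y) (ψ w) := dist_comm _ _
    have e3 : dist (ψ w) (ψ y') = dist (ψ y') (ψ w) := dist_comm _ _
    rw [e2] at h2; rw [e3] at h3
    linarith [h1.1, h2.2, h3.2]
  rw [abs_lt]
  constructor <;> simp only [hδ] at claim1 claim2 <;> linarith


end
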